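/- Let R be a right-flat right-linear TRS, and suppose s = s[f(s_1,…,s_m)]_{p̄} rewrites to t at position p̄ with rule f(l_1,…,l_m) → r, and ‖s‖ = ‖t‖, where ‖u‖ counts the positions of u whose subterms are not reachable from a constant. Then for every i ∈ {1,…,m}, if s_i is not reachable from a constant, then l_i is a variable. -/

import Mathlib

/-- First-order terms over function symbols `F` and variables `V`. -/
inductive Tm (F V : Type) : Type
  | var : V → Tm F V
  | app : F → List (Tm F V) → Tm F V

namespace Tm

variable {F V : Type}

/-- Height of a term: 0 for variables and constants. -/
def height : Tm F V → ℕ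
  | var _ => 0
  | app _ ts => ts.attach.foldr (fun t m => max (height t.1 + 1) m) 0
decreasing_by all_goals (simp_wf; have := List.sizeOf_lt_of_mem t.2; omega)

/-- Size (number of positions) of a term. -/
def size : Tm F V → ℕ
  | var _ => 1
  | app _ ts => 1 + (ts.attach.map (fun t => size t.1)).sum
decreasing_by all_goals (simp_wf; have := List.sizeOf_lt_of_mem t.2; omega)

/-- Apply a substitution. -/
def subst (σ : V → Tm F V) : Tm F V → Tm F V
  | var x => σ x
  | app f ts => app f (ts.attach.map (fun t => subst σ t.1))
decreasing_by all_goals (simp_wf; have := List.sizeOf_lt_of_mem t.2; omega)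

/-- List of variable occurrences. -/
def varList : Tm F V → List V
  | var x => [x]
  | app _ ts => (ts.attach.map (fun t => varList t.1)).flatten
decreasing_by all_goals (simp_wf; have := List.sizeOf_lt_of_mem t.2; omega)

/-- List of function-symbol occurrences. -/
def symList : Tm F V → List F
  | var _ => []
  | app f ts => f :: (ts.attach.map (fun t => symList t.1)).flatten
decreasing_by all_goals (simp_wf; have := List.sizeOf_lt_of_mem t.2; omega)

/-- The subterm at a position (positions are lists of argument indices). -/
def subAt : Tm F V → List ℕ → Option (Tm F V)
  | t, [] => some t
  | var _, _ :: _ => none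
  | app _ ts, i :: p => match ts[i]? with
      | some u => subAt u p
      | none => none

/-- Replace the subterm at a position. -/
def replAt : Tm F V → List ℕ → Tm F V → Option (Tm F V)
  | _, [], s => some s
  | var _, _ :: _, _ => none
  | app f ts, i :: p, s => match ts[i]? with
      | some u => (replAt u p s).map (fun u' => app f (ts.set i u'))
      | none => none

/-- `p` is a position of `t`. -/
def IsPos (t : Tm F V) (p : List ℕ) : Prop := (t.subAt p).isSome

/-- A term is a constant if it is a nullary function application. -/
def IsConst (t : Tm F V) : Prop := ∃ f : F, t = app f []

def Ground (t : Tm F V) : Prop := t.varList = []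

/-- A term is linear if each variable occurs at most once. -/
def Linear (t : Tm F V) : Prop := t.varList.Nodup

/-- A term is flat if its height is at most 1. -/
def Flat (t : Tm F V) : Prop := t.height ≤ 1

/-- A term is shallow if all variables occur at depth at most 1. -/
def Shallow (t : Tm F V) : Prop :=
  ∀ (p : List ℕ) (x : V), t.subAt p = some (var x) → p.length ≤ 1

end Tm

/-- A rewrite rule. -/
structure Rule (F V : Type) where
  lhs : Tm F V
  rhs : Tm F V

namespace Rule

variable {F V : Type}

/-- Standard well-formedness: the lhs is not a variable and variables of the
rhs occur in the lhs. -/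
def WF (r : Rule F V) : Prop :=
  (∀ x : V, r.lhs ≠ Tm.var x) ∧ ∀ x ∈ r.rhs.varList, x ∈ r.lhs.varList

def RightFlat (r : Rule F V) : Prop := r.rhs.Flat
def RightLinear (r : Rule F V) : Prop := r.rhs.Linear
def RightShallow (r : Rule F V) : Prop := r.rhs.Shallow
def FlatRule (r : Rule F V) : Prop := r.lhs.Flat ∧ r.rhs.Flat
def ShallowRule (r : Rule F V) : Prop := r.lhs.Shallow ∧ r.rhs.Shallow
def Collapsing (r : Rule F V) : Prop := ∃ x : V, r.rhs = Tm.var x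

/-- A permutative rule: linear, flat, height-preserving and variable-preserving. -/
def Permutative (r : Rule F V) : Prop :=
  r.WF ∧ r.lhs.Linear ∧ r.rhs.Linear ∧ r.lhs.Flat ∧ r.rhs.Flat ∧
    r.lhs.height = r.rhs.height ∧ ∀ x : V, x ∈ r.lhs.varList ↔ x ∈ r.rhs.varList

end Rule

/-- A permutative theory: a symmetric set of permutative rules. -/
def PermutativeTheory {F V : Type} (E : Set (Rule F V)) : Prop :=
  (∀ r ∈ E, r.Permutative) ∧ ∀ r ∈ E, (⟨r.rhs, r.lhs⟩ : Rule F V) ∈ E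

section Rewriting

variable {F V : Type}

/-- One rewrite step with rule `l → r` at position `p` using substitution `σ`. -/
def RewWith (l r : Tm F V) (p : List ℕ) (σ : V → Tm F V) (s t : Tm F V) : Prop :=
  s.subAt p = some (l.subst σ) ∧ s.replAt p (r.subst σ) = some t

/-- One rewrite step with TRS `R` at position `p`. -/
def RewAt (R : Set (Rule F V)) (p : List ℕ) (s t : Tm F V) : Prop :=
  ∃ r ∈ R, ∃ σ : V → Tm F V, RewWith r.lhs r.rhs p σ s t

/-- One rewrite step with TRS `R`. -/
def Rew (R : Set (Rule F V)) (s t : Tm F V) : Prop := ∃ p, RewAt R p s t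

/-- Reachability: reflexive-transitive closure of one-step rewriting. -/
def Reach (R : Set (Rule F V)) : Tm F V → Tm F V → Prop :=
  Relation.ReflTransGen (Rew R)

/-- One rewrite step with `R` modulo `E` : `s →E* · →R · →E* t`. -/
def RewMod (R E : Set (Rule F V)) (s t : Tm F V) : Prop :=
  ∃ u v, Reach E s u ∧ Rew R u v ∧ Reach E v t

/-- `R/E` is terminating from `s`. -/
def TerminatingFrom (R E : Set (Rule F V)) (s : Tm F V) : Prop :=
  ¬ ∃ f : ℕ → Tm F V, f 0 = s ∧ ∀ n, RewMod R E (f n) (f (n + 1))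

/-- `R/E` is terminating. -/
def Terminating (R E : Set (Rule F V)) : Prop :=
  ¬ ∃ f : ℕ → Tm F V, ∀ n, RewMod R E (f n) (f (n + 1))

/-- `t` is reachable from some constant. -/
def FromConst (R : Set (Rule F V)) (t : Tm F V) : Prop :=
  ∃ f : F, Reach R (Tm.app f []) t

/-- The measure `‖t‖`: number of positions of `t` whose subterm is not reachable
from a constant. -/
noncomputable def meas (R : Set (Rule F V)) (t : Tm F V) : ℕ :=
  Nat.card {p : List ℕ // ∃ u, t.subAt p = some u ∧ ¬ FromConst R u}

/-- `t` is a normal form w.r.t. `R/E`. -/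
def NFMod (R E : Set (Rule F V)) (t : Tm F V) : Prop := ¬ ∃ t', RewMod R E t t'

/-- `t` is `R`-irreducible. -/
def NF (R : Set (Rule F V)) (t : Tm F V) : Prop := ¬ ∃ t', Rew R t t'

/-- Innermost rewrite step with `R` (plain rewriting): all proper subterms of the
redex are irreducible. -/
def IRew (R : Set (Rule F V)) (s t : Tm F V) : Prop :=
  ∃ p, RewAt R p s t ∧
    ∀ (q : List ℕ) (w : Tm F V), q ≠ [] → s.subAt (p ++ q) = some w → NF R w

/-- Innermost rewrite step with `R` modulo `E`. -/
def IRewMod (R E : Set (Rule F V)) (s t : Tm F V) : Prop :=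
  ∃ u v, ∃ p : List ℕ, Reach E s u ∧ RewAt R p u v ∧ Reach E v t ∧
    ∀ (q : List ℕ) (w : Tm F V), q ≠ [] → u.subAt (p ++ q) = some w → NFMod R E w

/-- Innermost termination of `R/E`. -/
def ITerminating (R E : Set (Rule F V)) : Prop :=
  ¬ ∃ f : ℕ → Tm F V, ∀ n, IRewMod R E (f n) (f (n + 1))

end Rewriting

section Marking

variable {F V : Type}

/-- A derivation of length `n` with explicit rules, positions and substitutions. -/
def IsDeriv (R : Set (Rule F V)) (n : ℕ) (s : ℕ → Tm F V) (rl : ℕ → Rule F V)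
    (pp : ℕ → List ℕ) (sb : ℕ → V → Tm F V) : Prop :=
  ∀ i < n, rl i ∈ R ∧ RewWith (rl i).lhs (rl i).rhs (pp i) (sb i) (s i) (s (i + 1))

/-- `p'` is strictly below `p̄` : `p̄` is a proper prefix of `p'`. -/
def StrictBelow (pbar p : List ℕ) : Prop := ∃ q, q ≠ [] ∧ p = pbar ++ q

/-- A marking of a derivation. -/
def IsMarking (n : ℕ) (s : ℕ → Tm F V) (rl : ℕ → Rule F V)
    (pp : ℕ → List ℕ) (M : ℕ → List ℕ → Tm F V) : Prop :=
  (∀ p t, (s 0).subAt p = some t → M 0 p = t) ∧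
  ∀ i < n,
    (∀ p, (s (i + 1)).IsPos p → ¬ StrictBelow (pp i) p → M (i + 1) p = M i p) ∧
    (∀ (j : ℕ) (u : Tm F V), (rl i).rhs.subAt [j] = some u → u.IsConst →
        M (i + 1) (pp i ++ [j]) = u) ∧
    (∀ (j : ℕ) (p₁ : List ℕ) (x : V), (rl i).rhs.subAt [j] = some (Tm.var x) →
        (s (i + 1)).IsPos (pp i ++ j :: p₁) →
        ∃ q₀ : List ℕ, (rl i).lhs.subAt q₀ = some (Tm.var x) ∧
          M (i + 1) (pp i ++ j :: p₁) = M i (pp i ++ q₀ ++ p₁))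

end Marking

section WFSig

variable {F V : Type}

/-- Terms respecting the arity function. -/
inductive WFT (ar : F → ℕ) : Tm F V → Prop
  | var (x : V) : WFT ar (Tm.var x)
  | app (f : F) (ts : List (Tm F V)) : ts.length = ar f →
      (∀ t ∈ ts, WFT ar t) → WFT ar (Tm.app f ts)


namespace Tm
variable {F V : Type}

theorem subst_app (σ : V → Tm F V) (f : F) (ts : List (Tm F V)) :
    (app f ts).subst σ = app f (ts.map (subst σ)) := by
  rw [subst]; simp [List.attach_map_subtype_val]

theorem height_app_le (f : F) (ts : List (Tm F V)) (u : Tm F V) (hu : u ∈ ts) :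
    u.height + 1 ≤ (app f ts).height := by
  rw [height]
  have : ∀ (l : List {x // x ∈ ts}) (a : {x // x ∈ ts}), a ∈ l →
      a.1.height + 1 ≤ l.foldr (fun t m => max (height t.1 + 1) m) 0 := by
    intro l
    induction l with
    | nil => intro a ha; simp at ha
    | cons b l ih =>
      intro a ha
      rcases List.mem_cons.1 ha with h | h
      · subst h; simp
      · exact le_trans (ih a h) (by simp)
  exact this ts.attach ⟨u, hu⟩ (List.mem_attach _ _)

theorem height_eq_zero {u : Tm F V} (h : u.height = 0) :
    (∃ x, u = var x) ∨ ∃ c, u = app c [] := by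
  cases u with
  | var x => exact Or.inl ⟨x, rfl⟩
  | app c ts =>
    refine Or.inr ⟨c, ?_⟩
    cases ts with
    | nil => rfl
    | cons a l =>
      have := height_app_le c (a :: l) a (by simp)
      omega

theorem varList_app (f : F) (ts : List (Tm F V)) :
    (app f ts).varList = (ts.map varList).flatten := by
  rw [varList]; simp [List.attach_map_subtype_val]

end Tm
namespace Tm
variable {F V : Type}

@[simp] theorem subAt_nil (u : Tm F V) : u.subAt [] = some u := by rw [subAt]

theorem subAt_append (u : Tm F V) (p q : List ℕ) :
    u.subAt (p ++ q) = (u.subAt p).bind (fun w => w.subAt q) := by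
  induction p generalizing u with
  | nil => simp
  | cons i p ih =>
    cases u with
    | var x => simp [subAt]
    | app f ts =>
      rw [List.cons_append, subAt, subAt]
      cases h : ts[i]? with
      | none => simp
      | some w => simp [ih w]

theorem subAt_var {x : V} {q : List ℕ} {w : Tm F V}
    (h : (var x : Tm F V).subAt q = some w) : q = [] ∧ w = var x := by
  cases q with
  | nil => simp at h; exact ⟨rfl, h.symm⟩
  | cons i q => simp [subAt] at h

theorem replAt_self {u w t : Tm F V} {p : List ℕ} (h : u.replAt p w = some t) :
    t.subAt p = some w := by
  induction p generalizing u t with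
  | nil => simp [replAt] at h; subst h; simp
  | cons i p ih =>
    cases u with
    | var x => simp [replAt] at h
    | app f ts =>
      rw [replAt] at h
      cases hg : ts[i]? with
      | none => rw [hg] at h; simp at h
      | some v =>
        rw [hg] at h; simp only [Option.map_eq_some_iff] at h
        obtain ⟨v', hr, rfl⟩ := h
        rw [subAt]
        have hlt : i < ts.length := (List.getElem?_eq_some_iff.1 hg).1
        have : (ts.set i v')[i]? = some v' := by
          rw [List.getElem?_set_self]
          simpa using hlt
        rw [this]
        exact ih hr

theorem replAt_down {s t w : Tm F V} {p d : List ℕ}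
    (h : s.replAt (p ++ d) w = some t) {s' : Tm F V} (hs : s.subAt p = some s') :
    ∃ t', s'.replAt d w = some t' ∧ t.subAt p = some t' := by
  induction p generalizing s t with
  | nil => simp at hs; subst hs; exact ⟨t, h, by simp⟩
  | cons i p ih =>
    cases s with
    | var x => simp [subAt] at hs
    | app f ts =>
      rw [subAt] at hs
      rw [List.cons_append, replAt] at h
      cases hg : ts[i]? with
      | none => rw [hg] at hs; exact absurd hs (by simp)
      | some v =>
        rw [hg] at hs h
        simp only [Option.map_eq_some_iff] at h
        obtain ⟨v', hr, rfl⟩ := h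
        obtain ⟨t', h1, h2⟩ := ih hr hs
        refine ⟨t', h1, ?_⟩
        rw [subAt]
        have hlt : i < ts.length := (List.getElem?_eq_some_iff.1 hg).1
        have : (ts.set i v')[i]? = some v' := by
          rw [List.getElem?_set_self]
          simpa using hlt
        rw [this]; exact h2

theorem replAt_incomp {s t w : Tm F V} {P p : List ℕ}
    (h : s.replAt P w = some t) (h1 : ¬ P <+: p) (h2 : ¬ p <+: P) :
    t.subAt p = s.subAt p := by
  induction P generalizing s t p with
  | nil => exact absurd (List.nil_prefix) h1
  | cons i P ih =>
    cases p with
    | nil => exact absurd (List.nil_prefix) h2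
    | cons j p =>
      cases s with
      | var x => simp [replAt] at h
      | app f ts =>
        rw [replAt] at h
        cases hg : ts[i]? with
        | none => rw [hg] at h; simp at h
        | some v =>
          rw [hg] at h
          simp only [Option.map_eq_some_iff] at h
          obtain ⟨v', hr, rfl⟩ := h
          by_cases hij : i = j
          · subst hij
            rw [subAt, subAt]
            have hlt : i < ts.length := (List.getElem?_eq_some_iff.1 hg).1
            have hset : (ts.set i v')[i]? = some v' := by
              rw [List.getElem?_set_self]
              simpa using hlt
            rw [hset, hg]
            exact ih hr (fun hc => h1 (List.cons_prefix_cons.2 ⟨rfl, hc⟩))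
              (fun hc => h2 (List.cons_prefix_cons.2 ⟨rfl, hc⟩))
          · rw [subAt, subAt]
            have : (ts.set i v')[j]? = ts[j]? := by
              rw [List.getElem?_set_ne hij]
            rw [this]

end Tm
namespace Tm
variable {F V : Type}

theorem subAt_subst (σ : V → Tm F V) {u w : Tm F V} {q : List ℕ}
    (h : u.subAt q = some w) : (u.subst σ).subAt q = some (w.subst σ) := by
  induction q generalizing u with
  | nil => simp at h; subst h; simp
  | cons i q ih =>
    cases u with
    | var x => simp [subAt] at h
    | app f ts =>
      rw [subAt] at h
      cases hg : ts[i]? with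
      | none => rw [hg] at h; simp at h
      | some v =>
        rw [hg] at h
        rw [subst_app, subAt]
        have : (ts.map (subst σ))[i]? = some (v.subst σ) := by
          rw [List.getElem?_map]
          rw [hg]; rfl
        rw [this]
        exact ih h

theorem subst_subAt (σ : V → Tm F V) :
    ∀ (q : List ℕ) (u w : Tm F V), (u.subst σ).subAt q = some w →
    (∃ v, u.subAt q = some v ∧ w = v.subst σ) ∨
    (∃ qv x p₁, q = qv ++ p₁ ∧ u.subAt qv = some (Tm.var x) ∧ (σ x).subAt p₁ = some w) := by
  intro q
  induction q with
  | nil =>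
    intro u w h; simp at h
    exact Or.inl ⟨u, by simp, h.symm⟩
  | cons i q ih =>
    intro u w h
    cases u with
    | var x =>
      refine Or.inr ⟨[], x, i :: q, by simp, by simp, ?_⟩
      rw [subst] at h; exact h
    | app f ts =>
      rw [subst_app, subAt] at h
      cases hg : (ts.map (subst σ))[i]? with
      | none => rw [hg] at h; simp at h
      | some v =>
        rw [hg] at h
        rw [List.getElem?_map] at hg
        cases hg2 : ts[i]? with
        | none => rw [hg2] at hg; simp at hg
        | some u0 =>
          rw [hg2] at hg
          simp at hg
          subst hg
          rcases ih u0 w h with ⟨v0, h1, h2⟩ | ⟨qv, x, p₁, h1, h2, h3⟩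
          · refine Or.inl ⟨v0, ?_, h2⟩
            rw [subAt, hg2]
            exact h1
          · refine Or.inr ⟨i :: qv, x, p₁, by rw [h1]; rfl, ?_, h3⟩
            rw [subAt, hg2]
            exact h2

theorem subAt_mem_varList : ∀ {u : Tm F V} {q : List ℕ} {x : V},
    u.subAt q = some (var x) → x ∈ u.varList := by
  intro u q
  induction q generalizing u with
  | nil => intro x h; simp at h; subst h; simp [varList]
  | cons i q ih =>
    intro x h
    cases u with
    | var y => simp [subAt] at h
    | app f ts =>
      rw [subAt] at h
      cases hg : ts[i]? with
      | none => rw [hg] at h; simp at h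
      | some v =>
        rw [hg] at h
        rw [varList_app, List.mem_flatten]
        exact ⟨v.varList, List.mem_map_of_mem (List.mem_of_getElem? hg), ih h⟩

theorem mem_varList_subAt : ∀ (u : Tm F V) (x : V),
    x ∈ u.varList → ∃ q, u.subAt q = some (var x) := by
  intro u
  generalize hn : sizeOf u = n
  induction n using Nat.strong_induction_on generalizing u with
  | _ n IH =>
    subst hn
    cases u with
    | var y => intro x h; simp [varList] at h; subst h; exact ⟨[], by simp⟩
    | app f ts =>
      intro x h
      rw [varList_app, List.mem_flatten] at h
      obtain ⟨l, hl, hx⟩ := h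
      rw [List.mem_map] at hl
      obtain ⟨v, hv, rfl⟩ := hl
      have hsz : sizeOf v < sizeOf (app f ts : Tm F V) := by
        have := List.sizeOf_lt_of_mem hv
        simp; omega
      obtain ⟨q, hq⟩ := IH _ hsz v rfl x hx
      obtain ⟨i, hi⟩ := List.get_of_mem hv
      refine ⟨i.1 :: q, ?_⟩
      rw [subAt]
      have : ts[i.1]? = some v := by
        rw [List.getElem?_eq_getElem i.2]
        exact congrArg some hi
      rw [this]; exact hq

end Tm
namespace Tm
variable {F V : Type}

theorem var_antichain {u : Tm F V} {q d : List ℕ} {x : V} {w : Tm F V}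
    (h : u.subAt q = some (var x)) (h2 : u.subAt (q ++ d) = some w) : d = [] := by
  rw [subAt_append, h] at h2
  simp at h2
  exact (subAt_var h2).1

theorem linear_var_unique : ∀ (u : Tm F V), u.Linear →
    ∀ {q q' : List ℕ} {x : V}, u.subAt q = some (var x) → u.subAt q' = some (var x) → q = q' := by
  intro u
  generalize hn : sizeOf u = n
  induction n using Nat.strong_induction_on generalizing u with
  | _ n IH =>
    subst hn
    intro hlin q q' x h h'
    cases u with
    | var y =>
      rw [(subAt_var h).1, (subAt_var h').1]
    | app f ts =>
      cases q with
      | nil => simp at h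
      | cons i q =>
        cases q' with
        | nil => simp at h'
        | cons i' q' =>
          rw [subAt] at h h'
          cases hg : ts[i]? with
          | none => rw [hg] at h; simp at h
          | some v =>
            cases hg' : ts[i']? with
            | none => rw [hg'] at h'; simp at h'
            | some v' =>
              rw [hg] at h; rw [hg'] at h'
              have hnd : ((ts.map varList).flatten).Nodup := by
                rw [← varList_app]; exact hlin
              by_cases hii : i = i'
              · subst hii
                rw [hg] at hg'
                have hv : v = v' := by injection hg'
                subst hv
                have hsz : sizeOf v < sizeOf (app f ts : Tm F V) := by
                  have := List.sizeOf_lt_of_mem (List.mem_of_getElem? hg)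
                  simp; omega
                have hvlin : v.Linear := by
                  have : v.varList ∈ ts.map varList :=
                    List.mem_map_of_mem (List.mem_of_getElem? hg)
                  exact (List.nodup_flatten.1 hnd).1 _ this
                have := IH _ hsz v rfl hvlin h h'
                rw [this]
              · exfalso
                have hx : x ∈ v.varList := subAt_mem_varList h
                have hx' : x ∈ v'.varList := subAt_mem_varList h'
                have hpw := (List.nodup_flatten.1 hnd).2
                have hi : i < ts.length := (List.getElem?_eq_some_iff.1 hg).1
                have hi' : i' < ts.length := (List.getElem?_eq_some_iff.1 hg').1
                rw [List.pairwise_iff_getElem] at hpw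
                have hlen : (ts.map varList).length = ts.length := by simp
                have hv : (ts.map varList)[i]'(by omega) = v.varList := by
                  simp only [List.getElem_map]
                  have : ts[i] = v := by
                    exact (List.getElem?_eq_some_iff.1 hg).2
                  rw [this]
                have hv' : (ts.map varList)[i']'(by omega) = v'.varList := by
                  simp only [List.getElem_map]
                  have : ts[i'] = v' := by
                    exact (List.getElem?_eq_some_iff.1 hg').2
                  rw [this]
                rcases Nat.lt_or_ge i i' with hlt | hge
                · have := hpw i i' (by omega) (by omega) hlt
                  rw [hv, hv'] at this
                  exact this hx hx'
                · have hlt : i' < i := by omega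
                  have := hpw i' i (by omega) (by omega) hlt
                  rw [hv, hv'] at this
                  exact this hx' hx

theorem pos_finite : ∀ (u : Tm F V), {p : List ℕ | (u.subAt p).isSome}.Finite := by
  intro u
  generalize hn : sizeOf u = n
  induction n using Nat.strong_induction_on generalizing u with
  | _ n IH =>
    subst hn
    cases u with
    | var x =>
      apply Set.Finite.subset (Set.finite_singleton ([] : List ℕ))
      intro p hp
      simp only [Set.mem_setOf_eq] at hp
      cases p with
      | nil => rfl
      | cons i p => simp [subAt] at hp
    | app f ts =>
      have : {p : List ℕ | ((app f ts : Tm F V).subAt p).isSome} ⊆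
          insert [] (⋃ i ∈ Finset.range ts.length,
            (List.cons i) '' {p | ∀ v, ts[i]? = some v → (v.subAt p).isSome}) := by
        intro p hp
        simp only [Set.mem_setOf_eq] at hp
        cases p with
        | nil => exact Set.mem_insert _ _
        | cons i p =>
          rw [subAt] at hp
          cases hg : ts[i]? with
          | none => rw [hg] at hp; simp at hp
          | some v =>
            rw [hg] at hp
            refine Set.mem_insert_of_mem _ ?_
            simp only [Set.mem_iUnion]
            refine ⟨i, by simp [(List.getElem?_eq_some_iff.1 hg).1], p, ?_, rfl⟩
            intro v' hv'
            rw [hg] at hv'; injection hv' with e; rw [← e]; exact hp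
      apply Set.Finite.subset _ this
      apply Set.Finite.insert
      apply Set.Finite.biUnion (Finset.finite_toSet _)
      intro i hi
      apply Set.Finite.image
      simp only [Finset.coe_sort_coe, Finset.mem_coe, Finset.mem_range] at hi
      cases hg : ts[i]? with
      | none => exact absurd hg (by rw [List.getElem?_eq_getElem hi]; simp)
      | some v =>
        have hsz : sizeOf v < sizeOf (app f ts : Tm F V) := by
          have := List.sizeOf_lt_of_mem (List.mem_of_getElem? hg)
          simp; omega
        apply Set.Finite.subset (IH _ hsz v rfl)
        intro p hp
        exact hp v rfl

end Tm
namespace Tm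
variable {F V : Type}

theorem subst_var (σ : V → Tm F V) (x : V) : (var x : Tm F V).subst σ = σ x := by
  rw [subst]

theorem height_app_nil (c : F) : (app c ([] : List (Tm F V))).height = 0 := by
  rw [height]; rfl

theorem flat_subAt {r v : Tm F V} (hf : r.Flat) {q : List ℕ} (hq : q ≠ [])
    (h : r.subAt q = some v) : v.height = 0 := by
  cases q with
  | nil => exact absurd rfl hq
  | cons j q' =>
    cases r with
    | var x => simp [subAt] at h
    | app g rs =>
      rw [subAt] at h
      cases hg : rs[j]? with
      | none => rw [hg] at h; simp at h
      | some u =>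
        rw [hg] at h
        have h' : u.subAt q' = some v := h
        have hu : u.height = 0 := by
          have h1 := height_app_le g rs u (List.mem_of_getElem? hg)
          have h2 : (app g rs : Tm F V).height ≤ 1 := hf
          omega
        rcases height_eq_zero hu with ⟨y, rfl⟩ | ⟨c, rfl⟩
        · obtain ⟨rfl, rfl⟩ := subAt_var h'
          exact hu
        · cases q' with
          | nil => simp at h'; rw [← h']; exact height_app_nil c
          | cons k q'' => rw [subAt] at h'; simp at h'

end Tm
/-- If `s = s[f(s₁,…,s_m)]_{p̄}` rewrites to `t` at `p̄` with rule
`f(l₁,…,l_m) → r` of a right-flat right-linear TRS and `‖s‖ = ‖t‖`, then whenever `sᵢ`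
is not reachable from a constant, `lᵢ` is a variable. -/
theorem stmt8 {F V : Type} (R : Set (Rule F V))
    (hR : ∀ r ∈ R, r.RightFlat ∧ r.RightLinear) (hRwf : ∀ r ∈ R, r.WF)
    (s t : Tm F V) (pbar : List ℕ) (f : F) (ss ls : List (Tm F V)) (r : Tm F V)
    (σ : V → Tm F V)
    (hrule : (⟨Tm.app f ls, r⟩ : Rule F V) ∈ R)
    (hsub : s.subAt pbar = some (Tm.app f ss))
    (hmatch : ss = ls.map (Tm.subst σ))
    (hstep : RewWith (Tm.app f ls) r pbar σ s t)
    (hmeas : meas R s = meas R t) :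
    ∀ (i : ℕ) (si li : Tm F V), ss[i]? = some si → ls[i]? = some li →
      ¬ FromConst R si → ∃ x : V, li = Tm.var x := by
  classical
  intro i si li hgs hgl hbad
  by_contra hli
  push_neg at hli
  obtain ⟨hs1, hs2⟩ := hstep
  set l : Tm F V := Tm.app f ls with hl
  have hflat : r.Flat := (hR _ hrule).1
  have hlinr : r.Linear := (hR _ hrule).2
  have hwf := hRwf _ hrule
  -- Bad positions
  set Bad : Tm F V → Set (List ℕ) :=
    fun u => {p | ∃ w, u.subAt p = some w ∧ ¬ FromConst R w} with hBad
  have hmeas' : ∀ u : Tm F V, meas R u = (Bad u).ncard := fun u => rfl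
  have htpbar : t.subAt pbar = some (r.subst σ) := Tm.replAt_self hs2
  -- q₀ extraction
  have hq0 : ∀ x : V, (∃ qv, r.subAt qv = some (Tm.var x)) →
      ∃ q₀, l.subAt q₀ = some (Tm.var x) ∧ q₀ ≠ [] := by
    intro x ⟨qv, hqv⟩
    have hx : x ∈ r.varList := Tm.subAt_mem_varList hqv
    obtain ⟨q₀, hq₀⟩ := Tm.mem_varList_subAt l x (hwf.2 x hx)
    refine ⟨q₀, hq₀, ?_⟩
    rintro rfl
    simp at hq₀
  -- the transfer relation
  set P : List ℕ → List ℕ → Prop := fun p p' =>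
    ∃ qv p₁ x q₀, p = pbar ++ (qv ++ p₁) ∧ r.subAt qv = some (Tm.var x) ∧
      l.subAt q₀ = some (Tm.var x) ∧ q₀ ≠ [] ∧ p' = pbar ++ (q₀ ++ p₁) with hP
  set φ : List ℕ → List ℕ := fun p => if h : ∃ p', P p p' then h.choose else p with hφ
  -- Lemma A : bad positions strictly below pbar admit a transfer
  have lemA : ∀ p ∈ Bad t, ∀ q, q ≠ [] → p = pbar ++ q → ∃ p', P p p' := by
    intro p hp q hq hpq
    obtain ⟨w, hw, hwb⟩ := hp
    rw [hpq, Tm.subAt_append, htpbar] at hw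
    simp only [Option.bind_some] at hw
    rcases Tm.subst_subAt σ q r w hw with ⟨v, hv, rfl⟩ | ⟨qv, x, p₁, rfl, h2, h3⟩
    · have hv0 := Tm.flat_subAt hflat hq hv
      rcases Tm.height_eq_zero hv0 with ⟨x, rfl⟩ | ⟨c, rfl⟩
      · obtain ⟨q₀, hq₀, hq₀ne⟩ := hq0 x ⟨q, hv⟩
        exact ⟨pbar ++ (q₀ ++ []), q, [], x, q₀, by simp [hpq], by simpa using hv, hq₀, hq₀ne, rfl⟩
      · exfalso
        apply hwb
        refine ⟨c, ?_⟩
        have : (Tm.app c [] : Tm F V).subst σ = Tm.app c [] := by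
          rw [Tm.subst_app]; rfl
        rw [this]
        exact Relation.ReflTransGen.refl
    · obtain ⟨q₀, hq₀, hq₀ne⟩ := hq0 x ⟨qv, h2⟩
      exact ⟨pbar ++ (q₀ ++ p₁), qv, p₁, x, q₀, hpq, h2, hq₀, hq₀ne, rfl⟩
  -- Lemma B : transfers of bad positions land in Bad s
  have lemB : ∀ p p', P p p' → p ∈ Bad t → p' ∈ Bad s := by
    intro p p' hpp hp
    obtain ⟨qv, p₁, x, q₀, rfl, h2, h3, h4, rfl⟩ := hpp
    obtain ⟨w, hw, hwb⟩ := hp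
    rw [Tm.subAt_append, htpbar] at hw
    simp only [Option.bind_some] at hw
    rw [Tm.subAt_append, Tm.subAt_subst σ h2, Tm.subst_var] at hw
    simp only [Option.bind_some] at hw
    refine ⟨w, ?_, hwb⟩
    rw [Tm.subAt_append, hs1]
    simp only [Option.bind_some]
    rw [Tm.subAt_append, Tm.subAt_subst σ h3, Tm.subst_var]
    simpa using hw
  -- Lemma C : bad positions of t not strictly below pbar are bad in s
  have lemC : ∀ p ∈ Bad t, (∀ q, q ≠ [] → p ≠ pbar ++ q) → p ∈ Bad s := by
    intro p hp hnb
    obtain ⟨w, hw, hwb⟩ := hp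
    by_cases hpp : p <+: pbar
    · obtain ⟨d, hd⟩ := hpp
      have hsp : ∃ s', s.subAt p = some s' := by
        rw [← hd, Tm.subAt_append] at hs1
        cases hs' : s.subAt p with
        | none => rw [hs'] at hs1; simp at hs1
        | some s' => exact ⟨s', rfl⟩
      obtain ⟨s', hs'⟩ := hsp
      have hrepl : s.replAt (p ++ d) (r.subst σ) = some t := by rw [hd]; exact hs2
      obtain ⟨t', ht'1, ht'2⟩ := Tm.replAt_down hrepl hs'
      rw [hw] at ht'2
      have hwt' : w = t' := by injection ht'2
      subst hwt'
      refine ⟨s', hs', ?_⟩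
      intro ⟨c, hc⟩
      apply hwb
      refine ⟨c, Relation.ReflTransGen.tail hc ?_⟩
      refine ⟨d, ⟨Tm.app f ls, r⟩, hrule, σ, ?_, ht'1⟩
      rw [← hd, Tm.subAt_append, hs'] at hs1
      simpa using hs1
    · have hnp : ¬ pbar <+: p := by
        intro ⟨q, hq⟩
        cases Decidable.em (q = []) with
        | inl h => subst h; exact hpp ⟨[], by simpa using hq.symm⟩
        | inr h => exact hnb q h hq.symm
      rw [Tm.replAt_incomp hs2 hnp hpp] at hw
      exact ⟨w, hw, hwb⟩
  -- prefix comparison helper for variable positions of l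
  have lpos : ∀ {q₀ q₀' : List ℕ} {x x' : V}, l.subAt q₀ = some (Tm.var x) →
      l.subAt q₀' = some (Tm.var x') → q₀ <+: q₀' → q₀ = q₀' := by
    intro q₀ q₀' x x' h h' ⟨d, hd⟩
    subst hd
    rw [Tm.var_antichain h h', List.append_nil]
  -- injectivity of φ on Bad t
  have hinj : Set.InjOn φ (Bad t) := by
    intro p hp p' hp' heq
    simp only [hφ] at heq
    by_cases hc : ∃ p'', P p p''
    · by_cases hc' : ∃ p'', P p' p''
      · rw [dif_pos hc, dif_pos hc'] at heq
        obtain ⟨qv, π, x, q₀, hpd, h2, h3, h4, h5⟩ := hc.choose_spec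
        obtain ⟨qv', π', x', q₀', hpd', h2', h3', h4', h5'⟩ := hc'.choose_spec
        rw [h5, h5'] at heq
        have heq2 : q₀ ++ π = q₀' ++ π' := List.append_cancel_left heq
        have hq₀eq : q₀ = q₀' := by
          have ha : q₀ <+: q₀ ++ π := ⟨π, rfl⟩
          have hb : q₀' <+: q₀ ++ π := by rw [heq2]; exact ⟨π', rfl⟩
          rcases List.prefix_or_prefix_of_prefix ha hb with h | h
          · exact lpos h3 h3' h
          · exact (lpos h3' h3 h).symm
        subst hq₀eq
        have hπ : π = π' := List.append_cancel_left heq2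
        subst hπ
        have hx : x = x' := by
          rw [h3] at h3'
          injection h3' with h3''
          injection h3''
        subst hx
        have hqv : qv = qv' := Tm.linear_var_unique r hlinr h2 h2'
        rw [hpd, hpd', hqv]
      · exfalso
        rw [dif_pos hc, dif_neg hc'] at heq
        obtain ⟨qv, π, x, q₀, hpd, h2, h3, h4, h5⟩ := hc.choose_spec
        rw [h5] at heq
        have : ∃ p'', P p' p'' := by
          apply lemA p' hp' (q₀ ++ π) _ heq.symm
          intro hcon
          exact h4 (by cases q₀ with | nil => rfl | cons a q => simp at hcon)
        exact hc' this
    · by_cases hc' : ∃ p'', P p' p''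
      · exfalso
        rw [dif_neg hc, dif_pos hc'] at heq
        obtain ⟨qv, π, x, q₀, hpd, h2, h3, h4, h5⟩ := hc'.choose_spec
        rw [h5] at heq
        have : ∃ p'', P p p'' := by
          apply lemA p hp (q₀ ++ π) _ heq
          intro hcon
          exact h4 (by cases q₀ with | nil => rfl | cons a q => simp at hcon)
        exact hc this
      · rw [dif_neg hc, dif_neg hc'] at heq
        exact heq
  -- the image is contained in Bad s
  have himg : φ '' (Bad t) ⊆ Bad s := by
    rintro _ ⟨p, hp, rfl⟩
    simp only [hφ]
    by_cases hc : ∃ p'', P p p''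
    · rw [dif_pos hc]
      exact lemB p _ hc.choose_spec hp
    · rw [dif_neg hc]
      apply lemC p hp
      intro q hq hpq
      exact hc (lemA p hp q hq hpq)
  -- the missing element
  have hmem : pbar ++ [i] ∈ Bad s := by
    refine ⟨si, ?_, hbad⟩
    rw [Tm.subAt_append, hsub]
    simp only [Option.bind_some]
    rw [Tm.subAt, hgs]
    simp
  have hmiss : pbar ++ [i] ∉ φ '' (Bad t) := by
    rintro ⟨p, hp, heq⟩
    simp only [hφ] at heq
    by_cases hc : ∃ p'', P p p''
    · rw [dif_pos hc] at heq
      obtain ⟨qv, π, x, q₀, hpd, h2, h3, h4, h5⟩ := hc.choose_spec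
      rw [h5] at heq
      have heq2 : q₀ ++ π = [i] := List.append_cancel_left heq
      have hq₀ : q₀ = [i] ∧ π = [] := by
        cases q₀ with
        | nil => exact absurd rfl h4
        | cons a q =>
          simp only [List.cons_append, List.cons.injEq] at heq2
          obtain ⟨rfl, hq⟩ := heq2
          obtain ⟨rfl, rfl⟩ := List.append_eq_nil_iff.1 hq
          exact ⟨rfl, rfl⟩
      obtain ⟨rfl, rfl⟩ := hq₀
      rw [hl, Tm.subAt, hgl] at h3
      simp at h3
      exact hli x h3
    · rw [dif_neg hc] at heq
      subst heq
      exact hc (lemA _ hp [i] (by simp) rfl)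
  -- counting
  have hfin : (Bad s).Finite := by
    apply Set.Finite.subset (Tm.pos_finite s)
    rintro p ⟨w, hw, -⟩
    simp [hw]
  have hss : φ '' (Bad t) ⊂ Bad s :=
    (Set.ssubset_iff_of_subset himg).2 ⟨pbar ++ [i], hmem, hmiss⟩
  have hlt : (φ '' (Bad t)).ncard < (Bad s).ncard := Set.ncard_lt_ncard hss hfin
  rw [Set.ncard_image_of_injOn hinj] at hlt
  rw [hmeas' s, hmeas' t] at hmeas
  omega
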